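/- Nonnegativity of the q-Kullback–Leibler divergence (finite case): let 0 ≤ q < 1 and let p, r ∈ ℝ^n be probability vectors with p_i = 0 whenever r_i = 0. Then Σ_{i : p_i > 0} p_i log_q(p_i/r_i) ≥ 0, with equality if and only if p = r. -/

import Mathlib

open Finset

/-- The `q`-logarithm: `log_q(x) = (x^(1-q) - 1)/(1-q)` (for `x > 0`). -/
noncomputable def qlog (q x : ℝ) : ℝ := (x ^ (1 - q) - 1) / (1 - q)

lemma qlog_one (q : ℝ) : qlog q 1 = 0 := by
  simp [qlog]

/-- Pointwise key inequality: for `a, b > 0`, `a - b ≤ a * qlog q (a/b)`,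
strict when `a ≠ b`. -/
lemma qlog_key {q : ℝ} (hq1 : q < 1) {a b : ℝ} (ha : 0 < a) (hb : 0 < b)
    (hab : a ≠ b) : a - b < a * qlog q (a / b) := by
  set c : ℝ := 1 - q with hc
  have hcpos : 0 < c := by simp [hc]; linarith
  set y : ℝ := a / b with hy
  have hypos : 0 < y := div_pos ha hb
  have hyne : y ≠ 1 := fun h => hab ((div_eq_one_iff_eq hb.ne').mp h)
  have hs : -1 ≤ y - 1 := by linarith
  have hs' : y - 1 ≠ 0 := sub_ne_zero.mpr hyne
  have hbern : 1 + (1 + c) * (y - 1) < (1 + (y - 1)) ^ (1 + c) :=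
    one_add_mul_self_lt_rpow_one_add hs hs' (by linarith)
  have h1 : (1 : ℝ) + (y - 1) = y := by ring
  rw [h1] at hbern
  have h2 : y ^ (1 + c) = y * y ^ c :=
    Real.rpow_one_add' hypos.le (by positivity)
  rw [h2] at hbern
  -- hbern : 1 + (1+c)(y-1) < y * y^c
  have key : c * (y - 1) < y * y ^ c - y := by nlinarith
  -- multiply by b/c > 0 : b*(y-1) = a - b, and b*(y*y^c - y)/c = a*(y^c-1)/c
  have hba : b * y = a := by rw [hy]; field_simp
  have : b * (c * (y - 1)) < b * (y * y ^ c - y) :=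
    (mul_lt_mul_iff_right₀ hb).mpr key
  have hgoal : a * qlog q y = b * (y * y ^ c - y) / c := by
    rw [qlog, ← hc, ← hba]; field_simp
  rw [hgoal]
  rw [lt_div_iff₀ hcpos]
  nlinarith

/-- Nonnegativity of the `q`-KL divergence (finite case):
`Σ_{i : p_i > 0} p_i log_q(p_i / r_i) ≥ 0`, with equality iff `p = r`. -/
theorem qKL_nonneg (n : ℕ) (q : ℝ) (hq0 : 0 ≤ q) (hq1 : q < 1)
    (p r : Fin n → ℝ) (hp : ∀ i, 0 ≤ p i) (hpsum : ∑ i, p i = 1)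
    (hr : ∀ i, 0 ≤ r i) (hrsum : ∑ i, r i = 1)
    (habs : ∀ i, r i = 0 → p i = 0) :
    0 ≤ ∑ i ∈ Finset.univ.filter fun i => 0 < p i, p i * qlog q (p i / r i) ∧
      ((∑ i ∈ Finset.univ.filter fun i => 0 < p i, p i * qlog q (p i / r i)) = 0 ↔
        p = r) := by
  set s : Finset (Fin n) := Finset.univ.filter fun i => 0 < p i with hs
  have hmem : ∀ i ∈ s, 0 < p i := fun i hi => (Finset.mem_filter.mp hi).2
  have hrpos : ∀ i ∈ s, 0 < r i := by
    intro i hi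
    rcases (hr i).lt_or_eq with h | h
    · exact h
    · exact absurd (habs i h.symm) (hmem i hi).ne'
  have hnotmem : ∀ i ∉ s, p i = 0 := by
    intro i hi
    have : ¬ 0 < p i := by simpa [hs] using hi
    linarith [hp i, not_lt.mp this]
  have hpsum' : ∑ i ∈ s, p i = 1 := by
    rw [← hpsum]
    exact (Finset.sum_subset (Finset.subset_univ s)
      (fun i _ hi => hnotmem i hi)).symm ▸ rfl
  have hrsum' : ∑ i ∈ s, r i ≤ 1 := by
    rw [← hrsum]
    exact Finset.sum_le_sum_of_subset_of_nonneg (Finset.subset_univ s)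
      (fun i _ _ => hr i)
  -- pointwise bound
  have hptw : ∀ i ∈ s, p i - r i ≤ p i * qlog q (p i / r i) := by
    intro i hi
    rcases eq_or_ne (p i) (r i) with h | h
    · rw [h]; simp [div_self (hrpos i hi).ne', qlog_one]
    · exact (qlog_key hq1 (hmem i hi) (hrpos i hi) h).le
  have hlower : 1 - ∑ i ∈ s, r i ≤ ∑ i ∈ s, p i * qlog q (p i / r i) := by
    calc 1 - ∑ i ∈ s, r i = ∑ i ∈ s, (p i - r i) := by
          rw [Finset.sum_sub_distrib, hpsum']
      _ ≤ _ := Finset.sum_le_sum hptw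
  have hnonneg : 0 ≤ ∑ i ∈ s, p i * qlog q (p i / r i) := by linarith
  refine ⟨hnonneg, ?_, ?_⟩
  · -- equality implies p = r
    intro hzero
    have hT : ∑ i ∈ s, r i = 1 := by linarith
    have hsum_eq : ∑ i ∈ s, (p i - r i) = ∑ i ∈ s, p i * qlog q (p i / r i) := by
      rw [Finset.sum_sub_distrib, hpsum', hT, hzero]; ring
    have heach : ∀ i ∈ s, p i - r i = p i * qlog q (p i / r i) :=
      (Finset.sum_eq_sum_iff_of_le hptw).mp hsum_eq
    funext i
    by_cases hi : i ∈ s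
    · by_contra h
      exact absurd (heach i hi) (qlog_key hq1 (hmem i hi) (hrpos i hi) h).ne
    · -- p i = 0, and r i = 0 since the r mass on s is already 1
      have hp0 : p i = 0 := hnotmem i hi
      have hcompl : ∑ j ∈ sᶜ, r j = 0 := by
        have := Finset.sum_add_sum_compl s r
        rw [hT, hrsum] at this
        linarith
      have : r i = 0 := by
        have h0 : ∀ j ∈ sᶜ, 0 ≤ r j := fun j _ => hr j
        have := (Finset.sum_eq_zero_iff_of_nonneg h0).mp hcompl
        exact this i (Finset.mem_compl.mpr hi)
      rw [hp0, this]
  · -- p = r implies the sum is 0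
    rintro rfl
    apply Finset.sum_eq_zero
    intro i hi
    simp [div_self (hmem i hi).ne', qlog_one]
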